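/- Let $\boldsymbol{w} \in \Delta^{K-1}$ be a probability vector and $m_s \in \mathbb{R}$, $\sigma_s \geq 0$ for $s \in [K]$. Then the minimizer over $\nu \in \mathcal{P}_2(\mathbb{R})$ of $\sum_{s=1}^K w_s \mathsf{W}_2^2(\mathcal{N}(m_s, \sigma_s^2), \nu)$ is the Gaussian $\mathcal{N}(\bar{m}, \bar{\sigma}^2)$ with $\bar{m} = \sum_{s=1}^K w_s m_s$ and $\bar{\sigma} = \sum_{s=1}^K w_s \sigma_s$. -/

import Mathlib

open MeasureTheory ProbabilityTheory
open scoped NNReal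

/-- The squared Wasserstein-2 distance between two measures on `ℝ`, defined as the
infimum over couplings of the expected squared difference. -/
noncomputable def W2sq (μ ν : Measure ℝ) : ℝ :=
  sInf {r : ℝ | ∃ π : Measure (ℝ × ℝ), IsProbabilityMeasure π ∧
    π.map Prod.fst = μ ∧ π.map Prod.snd = ν ∧ r = ∫ p, (p.1 - p.2) ^ 2 ∂π}

open scoped ENNReal
open Filter

section Analysis
open Real

section expmom
lemma integral_x_exp {b : ℝ} (hb : 0 < b) : ∫ x : ℝ, x * rexp (-b * x ^ 2) = 0 := by
  have hderiv : ∀ x : ℝ, HasDerivAt (fun x => -(2*b)⁻¹ * rexp (-b * x ^ 2))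
      (x * rexp (-b * x ^ 2)) x := by
    intro x
    have h1 : HasDerivAt (fun x : ℝ => -b * x ^ 2) (-b * (2 * x)) x := by
      simpa using ((hasDerivAt_pow 2 x).const_mul (-b))
    have h2 := (h1.exp).const_mul (-(2*b)⁻¹)
    convert h2 using 1
    · rfl
    · rfl
    field_simp
  exact integral_eq_zero_of_hasDerivAt_of_integrable hderiv
    (integrable_mul_exp_neg_mul_sq hb)
    (((integrable_exp_neg_mul_sq hb).const_mul (-(2*b)⁻¹)))

lemma integrable_sq_exp {b : ℝ} (hb : 0 < b) :
    Integrable (fun x : ℝ => x ^ 2 * rexp (-b * x ^ 2)) := by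
  have := integrable_rpow_mul_exp_neg_mul_sq hb (s := 2) (by norm_num)
  convert this using 2 with x
  rw [← Real.rpow_natCast x 2]
  norm_num

lemma integral_sq_exp {b : ℝ} (hb : 0 < b) :
    ∫ x : ℝ, x ^ 2 * rexp (-b * x ^ 2) = (2*b)⁻¹ * Real.sqrt (π / b) := by
  have hderiv : ∀ x : ℝ, HasDerivAt (fun x => -(2*b)⁻¹ * (x * rexp (-b * x ^ 2)))
      (x ^ 2 * rexp (-b * x ^ 2) - (2*b)⁻¹ * rexp (-b * x ^ 2)) x := by
    intro x
    have h1 : HasDerivAt (fun x : ℝ => -b * x ^ 2) (-b * (2 * x)) x := by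
      simpa using ((hasDerivAt_pow 2 x).const_mul (-b))
    have h2 : HasDerivAt (fun x : ℝ => x * rexp (-b * x ^ 2))
        (1 * rexp (-b * x ^ 2) + x * (rexp (-b * x ^ 2) * (-b * (2 * x)))) x :=
      (hasDerivAt_id x).mul h1.exp
    have h3 := h2.const_mul (-(2*b)⁻¹)
    convert h3 using 1
    · rfl
    · rfl
    field_simp
    ring
  have hint : Integrable (fun x : ℝ =>
      x ^ 2 * rexp (-b * x ^ 2) - (2*b)⁻¹ * rexp (-b * x ^ 2)) :=
    (integrable_sq_exp hb).sub ((integrable_exp_neg_mul_sq hb).const_mul _)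
  have hf : Integrable (fun x : ℝ => -(2*b)⁻¹ * (x * rexp (-b * x ^ 2))) :=
    (integrable_mul_exp_neg_mul_sq hb).const_mul _
  have h0 := integral_eq_zero_of_hasDerivAt_of_integrable hderiv hint hf
  rw [integral_sub (integrable_sq_exp hb) ((integrable_exp_neg_mul_sq hb).const_mul _)] at h0
  rw [integral_const_mul, integral_gaussian] at h0
  linarith
end expmom

section gmom

lemma integrable_dirac'' {f : ℝ → ℝ} (hf : Measurable f) {a : ℝ} :
    Integrable f (Measure.dirac a) := by
  refine ⟨hf.aestronglyMeasurable, ?_⟩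
  rw [HasFiniteIntegral, lintegral_dirac' _ (by fun_prop)]
  exact ENNReal.coe_lt_top

variable {m : ℝ} {v : ℝ≥0}

lemma gaussianReal_withDensity (hv : v ≠ 0) :
    gaussianReal m v
      = volume.withDensity (fun x => ((gaussianPDFReal m v x).toNNReal : ℝ≥0∞)) := by
  rw [gaussianReal_of_var_ne_zero _ hv, gaussianPDF_def]
  rfl

lemma integral_gaussianReal_eval (hv : v ≠ 0) (g : ℝ → ℝ) :
    ∫ x, g x ∂(gaussianReal m v) = ∫ x, gaussianPDFReal m v x * g x := by
  rw [gaussianReal_withDensity hv,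
    integral_withDensity_eq_integral_smul ((measurable_gaussianPDFReal m v).real_toNNReal) g]
  congr 1 with x
  simp [NNReal.smul_def, Real.coe_toNNReal _ (gaussianPDFReal_nonneg m v x)]

lemma integrable_gaussianReal_iff (hv : v ≠ 0) (g : ℝ → ℝ) :
    Integrable g (gaussianReal m v)
      ↔ Integrable (fun x => gaussianPDFReal m v x * g x) volume := by
  rw [gaussianReal_withDensity hv,
    integrable_withDensity_iff_integrable_smul ((measurable_gaussianPDFReal m v).real_toNNReal)]
  constructor <;> intro h <;> [skip; skip] <;>
  · refine h.congr (Filter.Eventually.of_forall fun x => ?_)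
    simp [NNReal.smul_def, Real.coe_toNNReal _ (gaussianPDFReal_nonneg m v x)]

lemma gaussianPDFReal_zero_mean (hv : v ≠ 0) (y : ℝ) :
    gaussianPDFReal 0 v y = (Real.sqrt (2 * π * v))⁻¹ * rexp (-(2 * (v:ℝ))⁻¹ * y ^ 2) := by
  rw [gaussianPDFReal]
  congr 1
  rw [sub_zero]
  congr 1
  have hv' : (0:ℝ) < v := by positivity
  field_simp

lemma aux_c_sqrt (hv : v ≠ 0) :
    (Real.sqrt (2 * π * v))⁻¹ * Real.sqrt (π / (2 * (v:ℝ))⁻¹) = 1 := by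
  have hv' : (0:ℝ) < v := by positivity
  have h : π / (2 * (v:ℝ))⁻¹ = 2 * π * v := by field_simp
  rw [h, inv_mul_cancel₀]
  positivity

lemma integrable_id_gaussianReal (m : ℝ) (v : ℝ≥0) :
    Integrable (fun x => x) (gaussianReal m v) := by
  by_cases hv : v = 0
  · subst hv; rw [gaussianReal_zero_var]; exact integrable_dirac'' (by fun_prop)
  rw [integrable_gaussianReal_iff hv]
  set b : ℝ := (2 * (v:ℝ))⁻¹ with hbdef
  have hv' : (0:ℝ) < v := by positivity
  have hb : 0 < b := by positivity
  set c : ℝ := (Real.sqrt (2 * π * v))⁻¹ with hcdef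
  have hh : Integrable (fun y : ℝ => c * (y * rexp (-b * y ^ 2)) + (c * m) * rexp (-b * y ^ 2)) :=
    ((integrable_mul_exp_neg_mul_sq hb).const_mul c).add
      ((integrable_exp_neg_mul_sq hb).const_mul (c * m))
  have := hh.comp_sub_right m
  refine this.congr (Filter.Eventually.of_forall fun x => ?_)
  have h1 : gaussianPDFReal 0 v (x - m) = gaussianPDFReal m v x := by
    rw [gaussianPDFReal_sub, zero_add]
  beta_reduce
  rw [← h1, gaussianPDFReal_zero_mean hv]
  ring

lemma integral_id_gaussianReal (m : ℝ) (v : ℝ≥0) :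
    ∫ x, x ∂(gaussianReal m v) = m := by
  by_cases hv : v = 0
  · subst hv; rw [gaussianReal_zero_var]; simp
  rw [integral_gaussianReal_eval hv]
  set b : ℝ := (2 * (v:ℝ))⁻¹ with hbdef
  have hv' : (0:ℝ) < v := by positivity
  have hb : 0 < b := by positivity
  set c : ℝ := (Real.sqrt (2 * π * v))⁻¹ with hcdef
  have key : ∀ x : ℝ, gaussianPDFReal m v x * x
      = (fun y : ℝ => c * (y * rexp (-b * y ^ 2)) + (c * m) * rexp (-b * y ^ 2)) (x - m) := by
    intro x
    have h1 : gaussianPDFReal 0 v (x - m) = gaussianPDFReal m v x := by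
      rw [gaussianPDFReal_sub, zero_add]
    simp only
    rw [← h1, gaussianPDFReal_zero_mean hv]
    ring
  simp_rw [key]
  rw [integral_sub_right_eq_self
    (fun y : ℝ => c * (y * rexp (-b * y ^ 2)) + (c * m) * rexp (-b * y ^ 2)) m,
    integral_add ((integrable_mul_exp_neg_mul_sq hb).const_mul c)
      ((integrable_exp_neg_mul_sq hb).const_mul (c * m)),
    integral_const_mul, integral_const_mul, integral_x_exp hb, integral_gaussian]
  have h1 := aux_c_sqrt hv
  rw [← hbdef, ← hcdef] at h1
  linear_combination m * h1

lemma integrable_sq_gaussianReal (m : ℝ) (v : ℝ≥0) :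
    Integrable (fun x => x ^ 2) (gaussianReal m v) := by
  by_cases hv : v = 0
  · subst hv; rw [gaussianReal_zero_var]; exact integrable_dirac'' (by fun_prop)
  rw [integrable_gaussianReal_iff hv]
  set b : ℝ := (2 * (v:ℝ))⁻¹ with hbdef
  have hv' : (0:ℝ) < v := by positivity
  have hb : 0 < b := by positivity
  set c : ℝ := (Real.sqrt (2 * π * v))⁻¹ with hcdef
  have hh : Integrable (fun y : ℝ => c * (y ^ 2 * rexp (-b * y ^ 2))
      + ((2 * c * m) * (y * rexp (-b * y ^ 2)) + (c * m ^ 2) * rexp (-b * y ^ 2))) :=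
    ((integrable_sq_exp hb).const_mul c).add
      (((integrable_mul_exp_neg_mul_sq hb).const_mul _).add
        ((integrable_exp_neg_mul_sq hb).const_mul _))
  have := hh.comp_sub_right m
  refine this.congr (Filter.Eventually.of_forall fun x => ?_)
  have h1 : gaussianPDFReal 0 v (x - m) = gaussianPDFReal m v x := by
    rw [gaussianPDFReal_sub, zero_add]
  beta_reduce
  rw [← h1, gaussianPDFReal_zero_mean hv]
  ring

lemma integral_sq_gaussianReal (m : ℝ) (v : ℝ≥0) :
    ∫ x, x ^ 2 ∂(gaussianReal m v) = m ^ 2 + v := by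
  by_cases hv : v = 0
  · subst hv; rw [gaussianReal_zero_var]; simp
  rw [integral_gaussianReal_eval hv]
  set b : ℝ := (2 * (v:ℝ))⁻¹ with hbdef
  have hv' : (0:ℝ) < v := by positivity
  have hb : 0 < b := by positivity
  set c : ℝ := (Real.sqrt (2 * π * v))⁻¹ with hcdef
  have key : ∀ x : ℝ, gaussianPDFReal m v x * x ^ 2
      = (fun y : ℝ => c * (y ^ 2 * rexp (-b * y ^ 2))
        + ((2 * c * m) * (y * rexp (-b * y ^ 2)) + (c * m ^ 2) * rexp (-b * y ^ 2))) (x - m) := by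
    intro x
    have h1 : gaussianPDFReal 0 v (x - m) = gaussianPDFReal m v x := by
      rw [gaussianPDFReal_sub, zero_add]
    simp only
    rw [← h1, gaussianPDFReal_zero_mean hv]
    ring
  simp_rw [key]
  have hA : Integrable (fun y : ℝ => c * (y ^ 2 * rexp (-b * y ^ 2))) :=
    (integrable_sq_exp hb).const_mul c
  have hB : Integrable (fun y : ℝ => (2 * c * m) * (y * rexp (-b * y ^ 2))) :=
    (integrable_mul_exp_neg_mul_sq hb).const_mul _
  have hC : Integrable (fun y : ℝ => (c * m ^ 2) * rexp (-b * y ^ 2)) :=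
    (integrable_exp_neg_mul_sq hb).const_mul _
  have hBC : Integrable (fun y : ℝ => (2 * c * m) * (y * rexp (-b * y ^ 2))
      + (c * m ^ 2) * rexp (-b * y ^ 2)) := hB.add hC
  rw [integral_sub_right_eq_self (fun y : ℝ => c * (y ^ 2 * rexp (-b * y ^ 2))
      + ((2 * c * m) * (y * rexp (-b * y ^ 2)) + (c * m ^ 2) * rexp (-b * y ^ 2))) m,
    integral_add hA hBC, integral_add hB hC,
    integral_const_mul, integral_const_mul, integral_const_mul,
    integral_x_exp hb, integral_sq_exp hb, integral_gaussian]
  have h1 := aux_c_sqrt hv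
  rw [← hbdef, ← hcdef] at h1
  have h2 : (2 * b)⁻¹ = (v : ℝ) := by
    rw [hbdef]
    have : (0:ℝ) < v := by positivity
    field_simp
  nlinarith [h1, h2]

end gmom

end Analysis

section upper
open Real

lemma integral_affine_sq_gaussian (m : ℝ) (v : ℝ≥0) (e d : ℝ) :
    ∫ x, (e * (x - m) + d) ^ 2 ∂(gaussianReal m v) = e ^ 2 * v + d ^ 2 := by
  have hsq := integrable_sq_gaussianReal m v
  have hid := integrable_id_gaussianReal m v
  have e1 : ∀ x : ℝ, (e * (x - m) + d) ^ 2
      = e ^ 2 * x ^ 2 + (2 * e * d - 2 * e ^ 2 * m) * x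
        + (e ^ 2 * m ^ 2 - 2 * e * d * m + d ^ 2) := fun x => by ring
  simp_rw [e1]
  have hA : Integrable (fun x : ℝ => e ^ 2 * x ^ 2) (gaussianReal m v) := hsq.const_mul _
  have hB : Integrable (fun x : ℝ => (2 * e * d - 2 * e ^ 2 * m) * x) (gaussianReal m v) :=
    hid.const_mul _
  have hAB : Integrable (fun x : ℝ => e ^ 2 * x ^ 2 + (2 * e * d - 2 * e ^ 2 * m) * x)
      (gaussianReal m v) := hA.add hB
  rw [integral_add hAB (integrable_const _), integral_add hA hB, integral_const_mul,
    integral_const_mul, integral_const, integral_sq_gaussianReal, _root_.integral_id_gaussianReal]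
  simp only [measure_univ, probReal_univ, ENNReal.toReal_one, smul_eq_mul, one_mul]
  ring

lemma W2sq_nonneg_mem {μ ν : Measure ℝ} :
    BddBelow {r : ℝ | ∃ pp : Measure (ℝ × ℝ), IsProbabilityMeasure pp ∧
      pp.map Prod.fst = μ ∧ pp.map Prod.snd = ν ∧ r = ∫ p, (p.1 - p.2) ^ 2 ∂pp} := by
  refine ⟨0, fun r hr => ?_⟩
  obtain ⟨pp, hpp, h1, h2, hr⟩ := hr
  rw [hr]
  exact integral_nonneg fun p => sq_nonneg _

lemma W2sq_gaussian_le (m m' : ℝ) (σ σ' : ℝ≥0) :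
    W2sq (gaussianReal m (σ ^ 2)) (gaussianReal m' (σ' ^ 2))
      ≤ (m - m') ^ 2 + ((σ : ℝ) - σ') ^ 2 := by
  apply csInf_le W2sq_nonneg_mem
  by_cases hσ : σ = 0
  · subst hσ
    refine ⟨(gaussianReal m' (σ' ^ 2)).map (fun y => ((m : ℝ), y)), ?_, ?_, ?_, ?_⟩
    · exact Measure.isProbabilityMeasure_map (by fun_prop)
    · rw [Measure.map_map (by fun_prop) (by fun_prop)]
      have : (Prod.fst ∘ fun y : ℝ => ((m : ℝ), y)) = fun _ => m := rfl
      rw [this, Measure.map_const]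
      simp
    · rw [Measure.map_map (by fun_prop) (by fun_prop)]
      have : (Prod.snd ∘ fun y : ℝ => ((m : ℝ), y)) = id := rfl
      rw [this, Measure.map_id]
    · rw [integral_map (φ := fun y : ℝ => ((m : ℝ), y)) (by fun_prop)
        (f := fun p : ℝ × ℝ => (p.1 - p.2) ^ 2)
        ((measurable_fst.sub measurable_snd).pow_const 2).aestronglyMeasurable]
      have e2 : (∫ y, (((m : ℝ), y).1 - ((m : ℝ), y).2) ^ 2 ∂(gaussianReal m' (σ' ^ 2)))
          = ∫ y, (1 * (y - m') + (m' - m)) ^ 2 ∂(gaussianReal m' (σ' ^ 2)) := by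
        refine integral_congr_ae (Filter.Eventually.of_forall fun y => ?_)
        show (m - y) ^ 2 = _
        ring
      rw [e2, integral_affine_sq_gaussian]
      push_cast
      ring
  · have hσR : (0:ℝ) < σ := by positivity
    obtain ⟨c, hcdef⟩ : ∃ c : ℝ, c = (σ' : ℝ) / σ := ⟨_, rfl⟩
    refine ⟨(gaussianReal m (σ ^ 2)).map (fun x => (x, c * x + (m' - c * m))), ?_, ?_, ?_, ?_⟩
    · exact Measure.isProbabilityMeasure_map (by fun_prop)
    · rw [Measure.map_map (by fun_prop) (by fun_prop)]
      have : (Prod.fst ∘ fun x : ℝ => (x, c * x + (m' - c * m))) = id := rfl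
      rw [this, Measure.map_id]
    · rw [Measure.map_map (by fun_prop) (by fun_prop)]
      have : (Prod.snd ∘ fun x : ℝ => (x, c * x + (m' - c * m)))
          = (fun y => y + (m' - c * m)) ∘ (fun x => c * x) := rfl
      rw [this, ← Measure.map_map (by fun_prop) (by fun_prop)]
      have h1 : (gaussianReal m (σ ^ 2)).map (fun x => c * x)
          = gaussianReal (c * m) (⟨c ^ 2, sq_nonneg _⟩ * σ ^ 2) :=
        gaussianReal_map_const_mul c
      rw [h1]
      have h2 := gaussianReal_map_add_const (μ := c * m) (v := ⟨c ^ 2, sq_nonneg _⟩ * σ ^ 2)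
        (m' - c * m)
      rw [h2]
      congr 1
      · ring
      · ext
        show c ^ 2 * ((σ ^ 2 : ℝ≥0) : ℝ) = _
        push_cast
        rw [hcdef]
        field_simp
    · rw [integral_map (φ := fun x : ℝ => (x, c * x + (m' - c * m))) (by fun_prop)
        (f := fun p : ℝ × ℝ => (p.1 - p.2) ^ 2)
        ((measurable_fst.sub measurable_snd).pow_const 2).aestronglyMeasurable]
      have e2 : (∫ x, ((x, c * x + (m' - c * m)).1 - (x, c * x + (m' - c * m)).2) ^ 2
            ∂(gaussianReal m (σ ^ 2)))
          = ∫ x, ((1 - c) * (x - m) + (m - m')) ^ 2 ∂(gaussianReal m (σ ^ 2)) := by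
        refine integral_congr_ae (Filter.Eventually.of_forall fun x => ?_)
        show (x - (c * x + (m' - c * m))) ^ 2 = _
        ring
      rw [e2, integral_affine_sq_gaussian]
      have hc1 : (1 - c) * (σ : ℝ) = (σ : ℝ) - σ' := by
        rw [hcdef]
        field_simp
      push_cast
      rw [show (1 - c) ^ 2 * ((σ:ℝ) ^ 2) = ((1 - c) * (σ:ℝ)) ^ 2 by ring, hc1]
      ring

end upper

section lower

lemma abs_mul_le_half_sq (x y : ℝ) : ‖x * y‖ ≤ (1/2) * (x ^ 2 + y ^ 2) := by
  rw [Real.norm_eq_abs, abs_mul]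
  nlinarith [sq_nonneg (|x| - |y|), sq_abs x, sq_abs y, abs_nonneg x, abs_nonneg y]

lemma integrable_mul_of_sq {α : Type*} [MeasurableSpace α] {π : Measure α} {f g : α → ℝ}
    (hfm : AEStronglyMeasurable f π) (hgm : AEStronglyMeasurable g π)
    (hf2 : Integrable (fun x => f x ^ 2) π) (hg2 : Integrable (fun x => g x ^ 2) π) :
    Integrable (fun x => f x * g x) π := by
  refine Integrable.mono' ((hf2.add hg2).const_mul (1/2)) (hfm.mul hgm)
    (Filter.Eventually.of_forall fun x => ?_)
  exact abs_mul_le_half_sq _ _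

lemma integral_mul_le_sqrt {α : Type*} [MeasurableSpace α] {π : Measure α} {f g : α → ℝ}
    (hfm : AEStronglyMeasurable f π) (hgm : AEStronglyMeasurable g π)
    (hf2 : Integrable (fun x => f x ^ 2) π) (hg2 : Integrable (fun x => g x ^ 2) π) :
    ∫ x, f x * g x ∂π ≤ Real.sqrt (∫ x, f x ^ 2 ∂π) * Real.sqrt (∫ x, g x ^ 2 ∂π) := by
  have hf : MemLp f (ENNReal.ofReal 2) π := by
    rw [show ENNReal.ofReal 2 = 2 by norm_num]
    exact (memLp_two_iff_integrable_sq hfm).mpr hf2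
  have hg : MemLp g (ENNReal.ofReal 2) π := by
    rw [show ENNReal.ofReal 2 = 2 by norm_num]
    exact (memLp_two_iff_integrable_sq hgm).mpr hg2
  have hpq : Real.HolderConjugate 2 2 := Real.HolderConjugate.two_two
  have h1 : ∫ x, f x * g x ∂π ≤ ∫ x, ‖f x‖ * ‖g x‖ ∂π := by
    refine integral_mono (integrable_mul_of_sq hfm hgm hf2 hg2) ?_ fun x => ?_
    · refine Integrable.mono' ((hf2.add hg2).const_mul (1/2)) (hfm.norm.mul hgm.norm)
        (Filter.Eventually.of_forall fun x => ?_)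
      rw [norm_mul, norm_norm, norm_norm, ← norm_mul]
      exact abs_mul_le_half_sq _ _
    · calc f x * g x ≤ |f x * g x| := le_abs_self _
        _ = ‖f x‖ * ‖g x‖ := by rw [abs_mul]; rfl
  have h2 := integral_mul_norm_le_Lp_mul_Lq hpq hf hg
  have e1 : ∀ h : α → ℝ, (∫ x, ‖h x‖ ^ (2:ℝ) ∂π) = ∫ x, h x ^ 2 ∂π := by
    intro h
    refine integral_congr_ae (Filter.Eventually.of_forall fun x => ?_)
    show ‖h x‖ ^ (2:ℝ) = h x ^ 2
    rw [show ‖h x‖ ^ (2:ℝ) = ‖h x‖ ^ (2:ℕ) from by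
      rw [← Real.rpow_natCast]; norm_num]
    rw [Real.norm_eq_abs, sq_abs]
  rw [e1 f, e1 g] at h2
  calc ∫ x, f x * g x ∂π ≤ ∫ x, ‖f x‖ * ‖g x‖ ∂π := h1
    _ ≤ (∫ x, f x ^ 2 ∂π) ^ ((1:ℝ)/2) * (∫ x, g x ^ 2 ∂π) ^ ((1:ℝ)/2) := h2
    _ = Real.sqrt (∫ x, f x ^ 2 ∂π) * Real.sqrt (∫ x, g x ^ 2 ∂π) := by
        rw [Real.sqrt_eq_rpow, Real.sqrt_eq_rpow]

lemma integrable_id_of_sq {μ : Measure ℝ} [IsProbabilityMeasure μ]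
    (h2 : Integrable (fun x : ℝ => x ^ 2) μ) : Integrable (fun x : ℝ => x) μ := by
  have hb : Integrable (fun x : ℝ => x ^ 2 + 1) μ := h2.add (integrable_const 1)
  refine Integrable.mono' hb measurable_id'.aestronglyMeasurable
    (Filter.Eventually.of_forall fun x => ?_)
  rw [Real.norm_eq_abs]
  nlinarith [sq_nonneg (|x| - 1), sq_abs x, abs_nonneg x]

lemma W2sq_gaussian_ge (m : ℝ) (σ : ℝ≥0) (ν : Measure ℝ) [hνP : IsProbabilityMeasure ν]
    (hν2 : Integrable (fun x : ℝ => x ^ 2) ν) :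
    (m - ∫ y, y ∂ν) ^ 2
      + ((σ : ℝ) - Real.sqrt ((∫ y, y ^ 2 ∂ν) - (∫ y, y ∂ν) ^ 2)) ^ 2
      ≤ W2sq (gaussianReal m (σ ^ 2)) ν := by
  have hν1 : Integrable (fun x : ℝ => x) ν := integrable_id_of_sq hν2
  obtain ⟨a, hadef⟩ : ∃ a : ℝ, a = ∫ y, y ∂ν := ⟨_, rfl⟩
  obtain ⟨B, hBdef⟩ : ∃ B : ℝ, B = (∫ y, y ^ 2 ∂ν) - a ^ 2 := ⟨_, rfl⟩
  -- B is the variance of ν, B = ∫ (y - a)^2 ≥ 0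
  have hBint : (∫ y, (y - a) ^ 2 ∂ν) = B := by
    have e1 : ∀ y : ℝ, (y - a) ^ 2 = y ^ 2 - (2 * a) * y + a ^ 2 := fun y => by ring
    simp_rw [e1]
    have hX : Integrable (fun y : ℝ => (2 * a) * y) ν := hν1.const_mul _
    have hY : Integrable (fun y : ℝ => y ^ 2 - (2 * a) * y) ν := hν2.sub hX
    rw [integral_add hY (integrable_const _),
      integral_sub hν2 hX, integral_const_mul, integral_const]
    simp only [measure_univ, probReal_univ, ENNReal.toReal_one, smul_eq_mul, one_mul]
    rw [hBdef, ← hadef]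
    ring
  have hB0 : 0 ≤ B := by
    rw [← hBint]; exact integral_nonneg fun y => sq_nonneg _
  obtain ⟨b, hbdef⟩ : ∃ b : ℝ, b = Real.sqrt B := ⟨_, rfl⟩
  have hb0 : 0 ≤ b := hbdef ▸ Real.sqrt_nonneg _
  have hbsq : b ^ 2 = B := by rw [hbdef, sq, Real.mul_self_sqrt hB0]
  rw [← hadef, ← hBdef, ← hbdef]
  -- reduce to bounding every element of the coupling set
  apply le_csInf
  · refine ⟨∫ p, (p.1 - p.2) ^ 2 ∂((gaussianReal m (σ ^ 2)).prod ν),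
      (gaussianReal m (σ ^ 2)).prod ν, by infer_instance, ?_, ?_, rfl⟩
    · rw [Measure.map_fst_prod]; simp
    · rw [Measure.map_snd_prod]; simp
  intro r hr
  obtain ⟨π, hπP, hfst, hsnd, hr⟩ := hr
  subst hr
  have hm1 : Integrable (fun p : ℝ × ℝ => p.1) π := by
    have := integrable_id_gaussianReal m (σ ^ 2)
    rw [← hfst] at this
    exact (integrable_map_measure measurable_id'.aestronglyMeasurable
      measurable_fst.aemeasurable).mp this
  have hm2 : Integrable (fun p : ℝ × ℝ => p.2) π := by
    have := integrable_id_of_sq hν2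
    rw [← hsnd] at this
    exact (integrable_map_measure measurable_id'.aestronglyMeasurable
      measurable_snd.aemeasurable).mp this
  have hm1sq : Integrable (fun p : ℝ × ℝ => p.1 ^ 2) π := by
    have := integrable_sq_gaussianReal m (σ ^ 2)
    rw [← hfst] at this
    exact (integrable_map_measure (measurable_id'.pow_const 2).aestronglyMeasurable
      measurable_fst.aemeasurable).mp this
  have hm2sq : Integrable (fun p : ℝ × ℝ => p.2 ^ 2) π := by
    have := hν2
    rw [← hsnd] at this
    exact (integrable_map_measure (measurable_id'.pow_const 2).aestronglyMeasurable
      measurable_snd.aemeasurable).mp this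
  have hi1 : (∫ p : ℝ × ℝ, p.1 ∂π) = m := by
    rw [← integral_id_gaussianReal m (σ ^ 2), ← hfst,
      integral_map measurable_fst.aemeasurable measurable_id'.aestronglyMeasurable]
  have hi2 : (∫ p : ℝ × ℝ, p.2 ∂π) = a := by
    rw [hadef, ← hsnd,
      integral_map measurable_snd.aemeasurable measurable_id'.aestronglyMeasurable]
  have hi1sq : (∫ p : ℝ × ℝ, p.1 ^ 2 ∂π) = m ^ 2 + ((σ : ℝ)) ^ 2 := by
    have h := integral_sq_gaussianReal m (σ ^ 2)
    rw [← hfst, integral_map measurable_fst.aemeasurable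
      (measurable_id'.pow_const 2).aestronglyMeasurable] at h
    push_cast at h
    exact h
  have hi2sq : (∫ p : ℝ × ℝ, p.2 ^ 2 ∂π) = B + a ^ 2 := by
    have h : (∫ y : ℝ, y ^ 2 ∂ν) = B + a ^ 2 := by rw [hBdef]; ring
    rw [← hsnd, integral_map measurable_snd.aemeasurable
      (measurable_id'.pow_const 2).aestronglyMeasurable] at h
    exact h
  -- centered variables
  have hu2 : Integrable (fun p : ℝ × ℝ => (p.1 - m) ^ 2) π := by
    have e1 : ∀ p : ℝ × ℝ, (p.1 - m) ^ 2 = p.1 ^ 2 - (2 * m) * p.1 + m ^ 2 :=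
      fun p => by ring
    simp_rw [e1]
    have hX : Integrable (fun p : ℝ × ℝ => (2 * m) * p.1) π := hm1.const_mul _
    exact (hm1sq.sub hX).add (integrable_const _)
  have hv2 : Integrable (fun p : ℝ × ℝ => (p.2 - a) ^ 2) π := by
    have e1 : ∀ p : ℝ × ℝ, (p.2 - a) ^ 2 = p.2 ^ 2 - (2 * a) * p.2 + a ^ 2 :=
      fun p => by ring
    simp_rw [e1]
    have hX : Integrable (fun p : ℝ × ℝ => (2 * a) * p.2) π := hm2.const_mul _
    exact (hm2sq.sub hX).add (integrable_const _)
  have hum : AEStronglyMeasurable (fun p : ℝ × ℝ => p.1 - m) π :=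
    (measurable_fst.sub_const m).aestronglyMeasurable
  have hvm : AEStronglyMeasurable (fun p : ℝ × ℝ => p.2 - a) π :=
    (measurable_snd.sub_const a).aestronglyMeasurable
  have huv : Integrable (fun p : ℝ × ℝ => (p.1 - m) * (p.2 - a)) π :=
    integrable_mul_of_sq hum hvm hu2 hv2
  have hiu2 : (∫ p : ℝ × ℝ, (p.1 - m) ^ 2 ∂π) = ((σ : ℝ)) ^ 2 := by
    have e1 : ∀ p : ℝ × ℝ, (p.1 - m) ^ 2 = p.1 ^ 2 - (2 * m) * p.1 + m ^ 2 :=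
      fun p => by ring
    simp_rw [e1]
    have hX : Integrable (fun p : ℝ × ℝ => (2 * m) * p.1) π := hm1.const_mul _
    have hY : Integrable (fun p : ℝ × ℝ => p.1 ^ 2 - (2 * m) * p.1) π := hm1sq.sub hX
    rw [integral_add hY (integrable_const _),
      integral_sub hm1sq hX, integral_const_mul, integral_const,
      hi1, hi1sq]
    simp only [measure_univ, probReal_univ, ENNReal.toReal_one, smul_eq_mul, one_mul]
    ring
  have hiv2 : (∫ p : ℝ × ℝ, (p.2 - a) ^ 2 ∂π) = B := by
    have e1 : ∀ p : ℝ × ℝ, (p.2 - a) ^ 2 = p.2 ^ 2 - (2 * a) * p.2 + a ^ 2 :=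
      fun p => by ring
    simp_rw [e1]
    have hX : Integrable (fun p : ℝ × ℝ => (2 * a) * p.2) π := hm2.const_mul _
    have hY : Integrable (fun p : ℝ × ℝ => p.2 ^ 2 - (2 * a) * p.2) π := hm2sq.sub hX
    rw [integral_add hY (integrable_const _),
      integral_sub hm2sq hX, integral_const_mul, integral_const,
      hi2, hi2sq]
    simp only [measure_univ, probReal_univ, ENNReal.toReal_one, smul_eq_mul, one_mul]
    ring
  -- Cauchy-Schwarz
  have hcs : (∫ p : ℝ × ℝ, (p.1 - m) * (p.2 - a) ∂π) ≤ (σ : ℝ) * b := by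
    have h := integral_mul_le_sqrt hum hvm hu2 hv2
    rw [hiu2, hiv2, Real.sqrt_sq σ.coe_nonneg] at h
    rw [hbdef]
    exact h
  -- expand the cost
  have hexp : (∫ p : ℝ × ℝ, (p.1 - p.2) ^ 2 ∂π)
      = ((σ : ℝ)) ^ 2 + B + (m - a) ^ 2
        - 2 * ∫ p : ℝ × ℝ, (p.1 - m) * (p.2 - a) ∂π := by
    have e1 : ∀ p : ℝ × ℝ, (p.1 - p.2) ^ 2
        = ((p.1 - m) ^ 2 + (p.2 - a) ^ 2 - (2 : ℝ) * ((p.1 - m) * (p.2 - a)))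
          + ((2 * (m - a)) * (p.1 - m) - (2 * (m - a)) * (p.2 - a) + (m - a) ^ 2) :=
      fun p => by ring
    simp_rw [e1]
    have hu1 : Integrable (fun p : ℝ × ℝ => p.1 - m) π := hm1.sub (integrable_const _)
    have hv1 : Integrable (fun p : ℝ × ℝ => p.2 - a) π := hm2.sub (integrable_const _)
    have huvsum : Integrable (fun p : ℝ × ℝ => (p.1 - m) ^ 2 + (p.2 - a) ^ 2) π :=
      hu2.add hv2
    have huvc : Integrable (fun p : ℝ × ℝ => (2 : ℝ) * ((p.1 - m) * (p.2 - a))) π :=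
      huv.const_mul _
    have hA : Integrable (fun p : ℝ × ℝ => (p.1 - m) ^ 2 + (p.2 - a) ^ 2
        - (2 : ℝ) * ((p.1 - m) * (p.2 - a))) π := huvsum.sub huvc
    have hu1c : Integrable (fun p : ℝ × ℝ => (2 * (m - a)) * (p.1 - m)) π := hu1.const_mul _
    have hv1c : Integrable (fun p : ℝ × ℝ => (2 * (m - a)) * (p.2 - a)) π := hv1.const_mul _
    have huvdiff : Integrable (fun p : ℝ × ℝ => (2 * (m - a)) * (p.1 - m)
        - (2 * (m - a)) * (p.2 - a)) π := hu1c.sub hv1c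
    have hC : Integrable (fun p : ℝ × ℝ => (2 * (m - a)) * (p.1 - m)
        - (2 * (m - a)) * (p.2 - a) + (m - a) ^ 2) π := huvdiff.add (integrable_const _)
    rw [integral_add hA hC, integral_sub huvsum huvc,
      integral_add hu2 hv2, integral_const_mul,
      integral_add huvdiff (integrable_const _),
      integral_sub hu1c hv1c, integral_const_mul, integral_const_mul,
      integral_sub hm1 (integrable_const _), integral_sub hm2 (integrable_const _),
      integral_const, integral_const, hiu2, hiv2, hi1, hi2]
    simp only [integral_const, measure_univ, probReal_univ, ENNReal.toReal_one, smul_eq_mul, one_mul]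
    ring
  rw [hexp]
  nlinarith [hcs, hbsq]

end lower

lemma quad_min (K : ℕ) (w c : Fin K → ℝ) (_hw : ∀ s, 0 ≤ w s) (hsum : ∑ s, w s = 1) (a : ℝ) :
    ∑ s, w s * (c s - ∑ s', w s' * c s') ^ 2 ≤ ∑ s, w s * (c s - a) ^ 2 := by
  obtain ⟨cb, hcb⟩ : ∃ cb : ℝ, cb = ∑ s', w s' * c s' := ⟨_, rfl⟩
  rw [← hcb]
  have key : ∑ s, w s * (c s - a) ^ 2
      = ∑ s, w s * (c s - cb) ^ 2 + (a - cb) ^ 2 := by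
    have e : ∀ s ∈ Finset.univ, w s * (c s - a) ^ 2
        = w s * (c s - cb) ^ 2 + ((a ^ 2 - cb ^ 2) * w s + (2 * (cb - a)) * (w s * c s)) :=
      fun s _ => by ring
    rw [Finset.sum_congr rfl e, Finset.sum_add_distrib, Finset.sum_add_distrib,
      ← Finset.mul_sum, ← Finset.mul_sum, hsum, ← hcb]
    ring
  rw [key]
  nlinarith [sq_nonneg (a - cb), Finset.sum_nonneg
    (fun s (_ : s ∈ Finset.univ) => mul_nonneg (_hw s) (sq_nonneg (c s - cb)))]


/-- The Wasserstein-2 barycenter of Gaussians `N(m_s, σ_s²)` with weights `w` is the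
Gaussian with mean `∑ w_s m_s` and standard deviation `∑ w_s σ_s`: it minimizes
`ν ↦ ∑ w_s W₂²(N(m_s, σ_s²), ν)` over probability measures with finite second moment. -/
theorem gaussian_barycenter (K : ℕ) (w : Fin K → ℝ)
    (hw_nonneg : ∀ s, 0 ≤ w s) (hw_sum : ∑ s, w s = 1)
    (m : Fin K → ℝ) (σ : Fin K → ℝ≥0) :
    ∀ ν : Measure ℝ, IsProbabilityMeasure ν →
      Integrable (fun x => x ^ 2) ν →
      ∑ s, w s * W2sq (gaussianReal (m s) (σ s ^ 2))
          (gaussianReal (∑ s', w s' * m s') ((∑ s', ‖w s'‖₊ * σ s') ^ 2)) ≤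
        ∑ s, w s * W2sq (gaussianReal (m s) (σ s ^ 2)) ν := by
  intro ν hνP hν2
  haveI := hνP
  obtain ⟨a, hadef⟩ : ∃ a : ℝ, a = ∫ y, y ∂ν := ⟨_, rfl⟩
  obtain ⟨bb, hbbdef⟩ : ∃ bb : ℝ,
    bb = Real.sqrt ((∫ y, y ^ 2 ∂ν) - (∫ y, y ∂ν) ^ 2) := ⟨_, rfl⟩
  have hcoe : ((∑ s', ‖w s'‖₊ * σ s' : ℝ≥0) : ℝ) = ∑ s', w s' * (σ s' : ℝ) := by
    rw [NNReal.coe_sum]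
    refine Finset.sum_congr rfl fun s _ => ?_
    rw [NNReal.coe_mul, coe_nnnorm, Real.norm_of_nonneg (hw_nonneg s)]
  calc ∑ s, w s * W2sq (gaussianReal (m s) (σ s ^ 2))
          (gaussianReal (∑ s', w s' * m s') ((∑ s', ‖w s'‖₊ * σ s') ^ 2))
      ≤ ∑ s, w s * ((m s - ∑ s', w s' * m s') ^ 2
          + ((σ s : ℝ) - ∑ s', w s' * (σ s' : ℝ)) ^ 2) := by
        refine Finset.sum_le_sum fun s _ => mul_le_mul_of_nonneg_left ?_ (hw_nonneg s)
        have h := W2sq_gaussian_le (m s) (∑ s', w s' * m s') (σ s) (∑ s', ‖w s'‖₊ * σ s')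
        rwa [hcoe] at h
    _ ≤ ∑ s, w s * ((m s - a) ^ 2 + ((σ s : ℝ) - bb) ^ 2) := by
        have h1 := quad_min K w m hw_nonneg hw_sum a
        have h2 := quad_min K w (fun s => (σ s : ℝ)) hw_nonneg hw_sum bb
        simp_rw [mul_add]
        rw [Finset.sum_add_distrib, Finset.sum_add_distrib]
        exact add_le_add h1 h2
    _ ≤ ∑ s, w s * W2sq (gaussianReal (m s) (σ s ^ 2)) ν := by
        refine Finset.sum_le_sum fun s _ => mul_le_mul_of_nonneg_left ?_ (hw_nonneg s)
        have h := W2sq_gaussian_ge (m s) (σ s) ν hν2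
        rwa [← hbbdef, ← hadef] at h
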